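/- Let r ≥ 1, ω ∈ (0,1], δ > 0, ξ > 0, and ε_1,…,ε_r > 0. Let Ā_i and A_i (i = 1,…,r) be continuous i-multilinear maps on ℝ^n with ‖Ā_i − A_i‖ ≤ ε_i for each i, and let v ∈ ℝ^n satisfy ‖v‖ ≤ δ and ΔT̄_r(v) ≥ 0. Suppose that it is NOT the case that (ΔT̄_r(v) > 0 and ∑_{i=1}^r ε_i δ^i / i! ≤ ω ΔT̄_r(v)), but that ∑_{i=1}^r ε_i δ^i / i! ≤ ω ξ δ^r / r! (the 'absolute accuracy' outcome of the CHECK test). Then ΔT̄_r(v) ≤ ξ δ^r / r!, and |ΔT̄_r(w) − ΔT_r(w)| ≤ ξ δ^r / r! for every w ∈ ℝ^n with ‖w‖ ≤ δ. -/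

import Mathlib

/-- The (inexact or exact) Taylor decrement of degree `r` built from the
`i`-multilinear maps `A i` (the `i`-th derivatives), evaluated at `s`:
`ΔT_r(s) = −∑_{i=1}^r A_i[s]^i / i!`. -/
noncomputable def taylorDecrement (n r : ℕ)
    (A : ∀ i : ℕ, ContinuousMultilinearMap ℝ
      (fun _ : Fin i => EuclideanSpace ℝ (Fin n)) ℝ)
    (s : EuclideanSpace ℝ (Fin n)) : ℝ :=
  -∑ i ∈ Finset.Icc 1 r, (A i fun _ => s) / (i.factorial : ℝ)

/-- The `absolute` outcome of the CHECK test: if the relative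
test fails but `∑_{i=1}^r ε_i δ^i / i! ≤ ω ξ δ^r / r!` holds, then
`ΔT̄_r(v) ≤ ξ δ^r / r!` and `|ΔT̄_r(w) − ΔT_r(w)| ≤ ξ δ^r / r!` for all
`w` with `‖w‖ ≤ δ`. -/
theorem check_absolute_outcome (n r : ℕ) (hr : 1 ≤ r)
    (ω δ ξ : ℝ) (hω0 : 0 < ω) (hω1 : ω ≤ 1) (hδ : 0 < δ) (hξ : 0 < ξ)
    (ε : ℕ → ℝ) (hε : ∀ i ∈ Finset.Icc 1 r, 0 < ε i)
    (A Abar : ∀ i : ℕ, ContinuousMultilinearMap ℝ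
      (fun _ : Fin i => EuclideanSpace ℝ (Fin n)) ℝ)
    (hacc : ∀ i ∈ Finset.Icc 1 r, ‖Abar i - A i‖ ≤ ε i)
    (v : EuclideanSpace ℝ (Fin n)) (hv : ‖v‖ ≤ δ)
    (hnonneg : 0 ≤ taylorDecrement n r Abar v)
    (hnotrel : ¬ (0 < taylorDecrement n r Abar v ∧
      ∑ i ∈ Finset.Icc 1 r, ε i * δ ^ i / (i.factorial : ℝ) ≤
        ω * taylorDecrement n r Abar v))
    (habs : ∑ i ∈ Finset.Icc 1 r, ε i * δ ^ i / (i.factorial : ℝ) ≤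
      ω * ξ * δ ^ r / (r.factorial : ℝ)) :
    taylorDecrement n r Abar v ≤ ξ * δ ^ r / (r.factorial : ℝ) ∧
      ∀ w : EuclideanSpace ℝ (Fin n), ‖w‖ ≤ δ →
        |taylorDecrement n r Abar w - taylorDecrement n r A w| ≤
          ξ * δ ^ r / (r.factorial : ℝ) := by

  have hfac : (0:ℝ) < (r.factorial : ℝ) := by positivity
  have hbound : (0:ℝ) < ξ * δ ^ r / (r.factorial : ℝ) := by positivity
  constructor
  · rcases eq_or_lt_of_le hnonneg with h0 | hpos
    · linarith
    · have h2 : ¬ (∑ i ∈ Finset.Icc 1 r, ε i * δ ^ i / (i.factorial : ℝ) ≤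
          ω * taylorDecrement n r Abar v) := fun h => hnotrel ⟨hpos, h⟩
      push_neg at h2
      have : ω * taylorDecrement n r Abar v < ω * ξ * δ ^ r / (r.factorial : ℝ) :=
        lt_of_lt_of_le h2 habs
      have : ω * taylorDecrement n r Abar v ≤ ω * (ξ * δ ^ r / (r.factorial : ℝ)) := by
        have heq : ω * ξ * δ ^ r / (r.factorial : ℝ) = ω * (ξ * δ ^ r / (r.factorial : ℝ)) := by ring
        linarith
      exact le_of_mul_le_mul_left this hω0
  · intro w hw
    have hw0 : (0:ℝ) ≤ ‖w‖ := norm_nonneg _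
    have key : |taylorDecrement n r Abar w - taylorDecrement n r A w| ≤
        ∑ i ∈ Finset.Icc 1 r, ε i * δ ^ i / (i.factorial : ℝ) := by
      unfold taylorDecrement
      rw [neg_sub_neg, ← Finset.sum_sub_distrib]
      refine (Finset.abs_sum_le_sum_abs _ _).trans (Finset.sum_le_sum fun i hi => ?_)
      rw [div_sub_div_same, abs_div, abs_of_nonneg (by positivity : (0:ℝ) ≤ (i.factorial : ℝ))]
      refine div_le_div_of_nonneg_right ?_ (by positivity)
      have h1 : (A i fun _ => w) - (Abar i fun _ => w) = ((A i - Abar i) fun _ => w) := by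
        simp
      rw [h1]
      calc |((A i - Abar i) fun _ => w)|
          ≤ ‖A i - Abar i‖ * ∏ _j : Fin i, ‖w‖ :=
            (A i - Abar i).le_opNorm _
        _ = ‖Abar i - A i‖ * ‖w‖ ^ i := by rw [norm_sub_rev]; simp [Finset.prod_const]
        _ ≤ ε i * δ ^ i := by
            have := hacc i hi
            have hεi := (hε i hi).le
            exact mul_le_mul this (pow_le_pow_left₀ hw0 hw i) (by positivity) hεi
    have : ω * ξ * δ ^ r / (r.factorial : ℝ) ≤ ξ * δ ^ r / (r.factorial : ℝ) := by
      apply div_le_div_of_nonneg_right _ hfac.le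
      nlinarith [mul_le_of_le_one_left (mul_pos hξ (pow_pos hδ r)).le hω1]
    linarith
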